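/- In the binary cycle setting with Q = Π_i χ̆_i/√((1-m̆_i²)(1-m̆_{i+1}²)), the exact magnetization of the factorized measure P(s) = (1/(1+Q)) Π_i b_i(s_i,s_{i+1})/b_i(s_i) satisfies m_i = E_P[s_i] = ((1-Q)/(1+Q)) m̆_i for every i. -/

import Mathlib

open scoped BigOperators

open Finset

/-- The value ±1 of an Ising spin encoded by a Boolean. -/
noncomputable def spin (t : Bool) : ℝ := if t then 1 else -1

/-- Single-site BP belief with magnetization `m`. -/
noncomputable def bS (m s : ℝ) : ℝ := (1 + m * s) / 2

/-- Pairwise BP belief with magnetizations `m1, m2` and susceptibility `χ`. -/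
noncomputable def bP (m1 m2 χ s t : ℝ) : ℝ :=
  (1 + m1 * s + m2 * t + (m1 * m2 + χ) * s * t) / 4

lemma spin_true : spin true = 1 := rfl
lemma spin_false : spin false = -1 := rfl
lemma bS_spin_true (m : ℝ) : bS m (spin true) = (1 + m)/2 := by simp [bS, spin]
lemma bS_spin_false (m : ℝ) : bS m (spin false) = (1 - m)/2 := by simp [bS, spin]; ring
lemma bS_one (m : ℝ) : bS m 1 = (1 + m)/2 := by simp [bS]
lemma bS_neg_one (m : ℝ) : bS m (-1) = (1 - m)/2 := by simp [bS]; ring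

noncomputable def gg {n : ℕ} [NeZero n] (m : Fin n → ℝ) (i : Fin n)
    (S : Finset (Fin n)) (j : Fin n) (b : Bool) : ℝ :=
  (if j ∈ S then spin b / bS (m j) (spin b) else 1) *
  ((if j - 1 ∈ S then spin b else bS (m j) (spin b)) *
   (if j = i then spin b else 1))

open Fin.NatCast in
lemma cycle_struct {n : ℕ} [NeZero n] (S : Finset (Fin n)) (i : Fin n)
    (h : ∀ j, j ≠ i → ((j - 1 ∈ S) ↔ j ∈ S)) : S = ∅ ∨ S = Finset.univ := by
  have key : ∀ k : ℕ, (i + 1 + (k : Fin n) ∈ S ↔ (i + 1) ∈ S) := by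
    intro k
    induction k with
    | zero => simp
    | succ k ih =>
      by_cases hji : i + 1 + ((k + 1 : ℕ) : Fin n) = i
      · rw [hji]
        by_cases h1 : i + 1 = i
        · rw [h1]
        · have := h (i + 1) h1
          simpa using this
      · have hj := h _ hji
        have hsub : i + 1 + ((k + 1 : ℕ) : Fin n) - 1 = i + 1 + (k : Fin n) := by
          push_cast
          abel
        rw [hsub] at hj
        exact hj.symm.trans ih
  have all : ∀ j : Fin n, (j ∈ S ↔ (i + 1) ∈ S) := by
    intro j
    have := key (j - (i + 1)).val
    rwa [Fin.cast_val_eq_self, add_sub_cancel] at this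
  by_cases hS : (i + 1) ∈ S
  · right
    ext j
    simp [(all j).mpr hS]
  · left
    ext j
    simp only [Finset.notMem_empty, iff_false]
    exact fun hj => hS ((all j).mp hj)

lemma prod_ite_mem_split {ι M : Type*} [Fintype ι] [DecidableEq ι] [CommMonoid M]
    (S : Finset ι) (A B : ι → M) :
    ∏ j, (if j ∈ S then A j else B j) = (∏ j ∈ S, A j) * ∏ j ∈ univ \ S, B j := by
  rw [← Finset.prod_filter_mul_prod_filter_not univ (· ∈ S)]
  congr 1
  · rw [show Finset.filter (fun x => x ∈ S) univ = S by simp]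
    exact Finset.prod_congr rfl fun x hx => if_pos hx
  · rw [show Finset.filter (fun x => ¬ x ∈ S) univ = univ \ S by
      rw [Finset.sdiff_eq_filter]]
    exact Finset.prod_congr rfl fun x hx => if_neg (Finset.mem_sdiff.mp hx).2


section core
variable {n : ℕ} [NeZero n] (m χ : Fin n → ℝ)

lemma step1 (hm : ∀ i, |m i| < 1) (i : Fin n) (σ : Fin n → Bool) :
    spin (σ i) * ∏ j, bP (m j) (m (j + 1)) (χ j) (spin (σ j)) (spin (σ (j + 1)))
        / bS (m j) (spin (σ j))
    = ∑ S ∈ (univ : Finset (Fin n)).powerset,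
        (∏ j ∈ S, χ j / 4) * ∏ j, gg m i S j (σ j) := by
  have hbpos : ∀ j b, (0:ℝ) < bS (m j) (spin b) := by
    intro j b
    have := abs_lt.mp (hm j)
    cases b <;> simp [bS, spin] <;> linarith
  have hbne : ∀ j b, bS (m j) (spin b) ≠ 0 := fun j b => (hbpos j b).ne'
  have hw : ∀ j : Fin n,
      bP (m j) (m (j + 1)) (χ j) (spin (σ j)) (spin (σ (j + 1))) / bS (m j) (spin (σ j))
      = χ j * spin (σ j) * spin (σ (j + 1)) / (4 * bS (m j) (spin (σ j)))
        + bS (m (j + 1)) (spin (σ (j + 1))) := by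
    intro j
    have h2 : 1 + m j * spin (σ j) ≠ 0 := by
      have := hbne j (σ j); simp only [bS, div_ne_zero_iff] at this; exact this.1
    simp only [bP, bS]
    field_simp
    ring
  rw [Finset.prod_congr rfl (fun j _ => hw j), Finset.prod_add, Finset.mul_sum]
  refine Finset.sum_congr rfl fun S _ => ?_
  -- decompose u-product
  have hu : ∏ j ∈ S, χ j * spin (σ j) * spin (σ (j + 1)) / (4 * bS (m j) (spin (σ j)))
      = (∏ j ∈ S, χ j / 4) * (∏ j ∈ S, spin (σ j) / bS (m j) (spin (σ j)))
        * ∏ j ∈ S, spin (σ (j + 1)) := by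
    rw [← Finset.prod_mul_distrib, ← Finset.prod_mul_distrib]
    refine Finset.prod_congr rfl fun j _ => ?_
    rw [div_mul_div_comm, div_mul_eq_mul_div]
  -- decompose gg-product
  have hg : ∏ j, gg m i S j (σ j)
      = (∏ j ∈ S, spin (σ j) / bS (m j) (spin (σ j)))
        * (((∏ j ∈ S, spin (σ (j + 1)))
            * ∏ j ∈ univ \ S, bS (m (j + 1)) (spin (σ (j + 1)))) * spin (σ i)) := by
    unfold gg
    rw [Finset.prod_mul_distrib, Finset.prod_mul_distrib]
    congr 1
    · rw [Finset.prod_ite_mem univ S _, Finset.univ_inter]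
    congr 1
    · have he : ∀ j : Fin n,
          (if j ∈ S then spin (σ (j+1)) else bS (m (j+1)) (spin (σ (j+1))))
          = (fun k => if k - 1 ∈ S then spin (σ k) else bS (m k) (spin (σ k))) (j + 1) := by
        intro j; simp
      calc ∏ j, (if j - 1 ∈ S then spin (σ j) else bS (m j) (spin (σ j)))
          = ∏ j, (if j ∈ S then spin (σ (j+1)) else bS (m (j+1)) (spin (σ (j+1)))) := by
            rw [Finset.prod_congr rfl (fun j _ => he j)]
            exact (Equiv.prod_comp (Equiv.addRight (1 : Fin n)) _).symm
        _ = _ := prod_ite_mem_split S _ _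
    · rw [Finset.prod_ite_eq' univ i _, if_pos (Finset.mem_univ i)]
  rw [hg, hu]
  ring


lemma step2 (i : Fin n) (S : Finset (Fin n)) :
    ∑ σ : Fin n → Bool, ∏ j, gg m i S j (σ j)
    = ∏ j, (gg m i S j true + gg m i S j false) := by
  have h := Finset.prod_univ_sum (fun _ : Fin n => (univ : Finset Bool))
    (fun j b => gg m i S j b)
  rw [Fintype.piFinset_univ] at h
  rw [← h]
  exact Finset.prod_congr rfl fun j _ => Fintype.sum_bool _

lemma val_empty (i : Fin n) :
    ∏ j, (gg m i (∅ : Finset (Fin n)) j true + gg m i ∅ j false) = m i := by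
  rw [Finset.prod_eq_single i]
  · simp [gg, bS, spin]; ring
  · intro j _ hji
    simp [gg, bS, spin, hji]; ring
  · simp

lemma val_univ (hm : ∀ i, |m i| < 1) (i : Fin n) :
    (∏ j, χ j / 4) * ∏ j, (gg m i (univ : Finset (Fin n)) j true + gg m i univ j false)
    = -(m i) * ∏ j, χ j / (1 - m j ^ 2) := by
  have h1p : ∀ j, (0:ℝ) < 1 + m j := fun j => by have := abs_lt.mp (hm j); linarith
  have h1m : ∀ j, (0:ℝ) < 1 - m j := fun j => by have := abs_lt.mp (hm j); linarith
  rw [← Finset.prod_mul_distrib]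
  have key : ∀ j : Fin n,
      χ j / 4 * (gg m i univ j true + gg m i univ j false)
      = (if j = i then -(m i) else 1) * (χ j / (1 - m j ^ 2)) := by
    intro j
    have hp := (h1p j).ne'
    have hq := (h1m j).ne'
    have hr : (1:ℝ) - m j ^ 2 ≠ 0 := by
      have h : (1:ℝ) - m j ^ 2 = (1 + m j) * (1 - m j) := by ring
      rw [h]; exact mul_ne_zero hp hq
    by_cases hj : j = i
    · subst hj
      simp only [gg, Finset.mem_univ, if_true, spin_true, spin_false,
        bS_spin_true, bS_spin_false, bS_one, bS_neg_one, mul_one, one_mul]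
      field_simp
      ring
    · simp only [gg, Finset.mem_univ, if_true, if_neg hj, spin_true, spin_false,
        bS_spin_true, bS_spin_false, bS_one, bS_neg_one, mul_one, one_mul]
      field_simp
      ring
  rw [Finset.prod_congr rfl (fun j _ => key j), Finset.prod_mul_distrib,
    Finset.prod_ite_eq' univ i, if_pos (Finset.mem_univ i)]

lemma val_zero (hm : ∀ i, |m i| < 1) (i : Fin n) (S : Finset (Fin n))
    (h0 : S ≠ ∅) (h1 : S ≠ univ) :
    (∏ j ∈ S, χ j / 4) * ∏ j, (gg m i S j true + gg m i S j false) = 0 := by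
  have h1p : ∀ j, (0:ℝ) < 1 + m j := fun j => by have := abs_lt.mp (hm j); linarith
  have h1m : ∀ j, (0:ℝ) < 1 - m j := fun j => by have := abs_lt.mp (hm j); linarith
  have hbne : ∀ j b, bS (m j) (spin b) ≠ 0 := by
    intro j b
    cases b <;> simp [bS, spin] <;> [skip; skip] <;> intro hc <;> nlinarith [h1p j, h1m j]
  have hex : ∃ j, j ≠ i ∧ ¬((j - 1 ∈ S) ↔ j ∈ S) := by
    by_contra hc
    push_neg at hc
    rcases cycle_struct S i (fun j hji => hc j hji) with h | h
    · exact h0 h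
    · exact h1 h
  obtain ⟨j, hji, hmix⟩ := hex
  apply mul_eq_zero_of_right
  apply Finset.prod_eq_zero (Finset.mem_univ j)
  by_cases hjS : j ∈ S
  · have hpre : j - 1 ∉ S := fun hc => hmix ⟨fun _ => hjS, fun _ => hc⟩
    simp only [gg, if_pos hjS, if_neg hpre, if_neg hji, mul_one]
    rw [div_mul_cancel₀ _ (hbne j true), div_mul_cancel₀ _ (hbne j false)]
    simp [spin]
  · have hpre : j - 1 ∈ S := by
      by_contra hc
      exact hmix ⟨fun h => absurd h hc, fun h => absurd h hjS⟩
    simp [gg, if_pos hpre, if_neg hjS, if_neg hji, spin]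

lemma core (hm : ∀ i, |m i| < 1) (i : Fin n) :
    (∑ σ : Fin n → Bool, spin (σ i) *
        ∏ j, bP (m j) (m (j + 1)) (χ j) (spin (σ j)) (spin (σ (j + 1)))
          / bS (m j) (spin (σ j)))
    = (1 - ∏ j, χ j / (1 - m j ^ 2)) * m i := by
  classical
  rw [Finset.sum_congr rfl (fun σ _ => step1 m χ hm i σ), Finset.sum_comm]
  have hterm : ∀ S ∈ (univ : Finset (Fin n)).powerset,
      (∑ σ : Fin n → Bool, (∏ j ∈ S, χ j / 4) * ∏ j, gg m i S j (σ j))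
      = (∏ j ∈ S, χ j / 4) * ∏ j, (gg m i S j true + gg m i S j false) := by
    intro S _
    rw [← Finset.mul_sum, step2]
  rw [Finset.sum_congr rfl hterm]
  have hsub : ({∅, univ} : Finset (Finset (Fin n))) ⊆ (univ : Finset (Fin n)).powerset := by
    intro S _
    simp [Finset.mem_powerset]
  rw [← Finset.sum_subset hsub]
  · have hnemp : Nonempty (Fin n) := Fin.pos_iff_nonempty.mp (Nat.pos_of_ne_zero (NeZero.ne n))
    have hne : (∅ : Finset (Fin n)) ≠ univ := Ne.symm (Finset.univ_nonempty.ne_empty)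
    rw [Finset.sum_pair hne, Finset.prod_empty, one_mul, val_empty, val_univ m χ hm i]
    ring
  · intro S hS hS2
    simp only [Finset.mem_insert, Finset.mem_singleton] at hS2
    push_neg at hS2
    exact val_zero m χ hm i S hS2.1.ne_empty hS2.2

end core

/-- In the binary cycle setting with
`Q = Π_i χ̆_i/√((1-m̆_i²)(1-m̆_{i+1}²))`, the exact magnetization of the factorized
measure `P(s) = (1/(1+Q)) Π_i b_i(s_i,s_{i+1})/b_i(s_i)` satisfies
`m_i = E_P[s_i] = ((1-Q)/(1+Q)) m̆_i` for every `i`. -/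
theorem stmt_7 (n : ℕ) [NeZero n] (m χ : Fin n → ℝ)
    (hm : ∀ i, |m i| < 1)
    (hnn : ∀ (i : Fin n) (s t : Bool),
      0 ≤ bP (m i) (m (i + 1)) (χ i) (spin s) (spin t)) :
    let Q : ℝ := ∏ i, χ i / Real.sqrt ((1 - (m i) ^ 2) * (1 - (m (i + 1)) ^ 2))
    let P : (Fin n → Bool) → ℝ := fun σ =>
      (∏ i, bP (m i) (m (i + 1)) (χ i) (spin (σ i)) (spin (σ (i + 1)))
          / bS (m i) (spin (σ i))) / (1 + Q)
    Q ≠ -1 →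
    ∀ i : Fin n, (∑ σ : Fin n → Bool, spin (σ i) * P σ) = ((1 - Q) / (1 + Q)) * m i := by
  intro Q P hQ i
  have ha : ∀ j, (0:ℝ) < 1 - m j ^ 2 := by
    intro j
    have := abs_lt.mp (hm j)
    nlinarith
  have hQr : Q = ∏ j, χ j / (1 - m j ^ 2) := by
    show (∏ j, χ j / Real.sqrt ((1 - m j ^ 2) * (1 - m (j + 1) ^ 2))) = _
    have e1 : ∀ j : Fin n, χ j / Real.sqrt ((1 - m j ^ 2) * (1 - m (j + 1) ^ 2))
        = χ j / Real.sqrt (1 - m j ^ 2) / Real.sqrt (1 - m (j + 1) ^ 2) := by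
      intro j
      rw [Real.sqrt_mul (ha j).le, div_div]
    rw [Finset.prod_congr rfl (fun j _ => e1 j), Finset.prod_div_distrib,
      Finset.prod_div_distrib]
    have e2 : ∏ j : Fin n, Real.sqrt (1 - m (j + 1) ^ 2) = ∏ j, Real.sqrt (1 - m j ^ 2) :=
      Fintype.prod_equiv (Equiv.addRight (1 : Fin n)) _ _ (fun j => rfl)
    rw [e2, div_div]
    have e3 : (∏ j, Real.sqrt (1 - m j ^ 2)) * (∏ j, Real.sqrt (1 - m j ^ 2))
        = ∏ j, (1 - m j ^ 2) := by
      rw [← Finset.prod_mul_distrib]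
      exact Finset.prod_congr rfl fun j _ => Real.mul_self_sqrt (ha j).le
    rw [e3, ← Finset.prod_div_distrib]
  have hP : ∀ σ : Fin n → Bool, spin (σ i) * P σ
      = spin (σ i) * (∏ j, bP (m j) (m (j + 1)) (χ j) (spin (σ j)) (spin (σ (j + 1)))
          / bS (m j) (spin (σ j))) / (1 + Q) := by
    intro σ
    have hPσ : P σ = (∏ j, bP (m j) (m (j + 1)) (χ j) (spin (σ j)) (spin (σ (j + 1)))
        / bS (m j) (spin (σ j))) / (1 + Q) := rfl
    rw [hPσ, mul_div_assoc]
  rw [Finset.sum_congr rfl (fun σ _ => hP σ), ← Finset.sum_div, core m χ hm i, ← hQr,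
    mul_div_right_comm]
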